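/- Let V and W be finite-dimensional real inner product spaces, let (J₁, J₂, J₃) be a compatible quaternionic structure on V, and let (e_1, …, e_n, η_1, …, η_d) be an orthonormal basis of V × W. Writing x¹ for the V-component of x ∈ V × W, for each s ∈ {1, 2, 3} one has Σ_{j=1}^{n} Σ_{β=1}^{d} ( ⟨e_j¹, η_β¹⟩² − Σ_{k=1}^{3} ⟨e_j¹, J_k(η_β¹)⟩² ) = −Σ_{k∈{1,2,3}, k≠s} Σ_{j=1}^{n} Σ_{β=1}^{d} ⟨J_k(η_β¹), e_j¹⟩² + Σ_{i=1}^{n} Σ_{j=1}^{n} ( ⟨J_s(e_i¹), e_j¹⟩² − ⟨e_i¹, e_j¹⟩² ). (This is the tangent-vector identity (hMAIN2) in the paper's Lemma 4.1.) -/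

import Mathlib

open scoped RealInnerProductSpace

lemma aux_parseval {V W : Type*} [NormedAddCommGroup V] [InnerProductSpace ℝ V]
    [NormedAddCommGroup W] [InnerProductSpace ℝ W]
    {n d : ℕ} (b : OrthonormalBasis (Fin n ⊕ Fin d) ℝ (WithLp 2 (V × W))) (v : V) :
    (∑ j : Fin n, ⟪v, (b (Sum.inl j)).fst⟫ ^ 2)
      + ∑ β : Fin d, ⟪v, (b (Sum.inr β)).fst⟫ ^ 2 = ⟪v, v⟫ := by
  have h := b.sum_inner_mul_inner ((WithLp.equiv 2 (V × W)).symm (v, 0))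
    ((WithLp.equiv 2 (V × W)).symm (v, 0))
  simpa [WithLp.prod_inner_apply, WithLp.equiv_symm_apply, ← WithLp.fst.eq_def, ← WithLp.snd.eq_def,
    Fintype.sum_sum_type, real_inner_comm, sq] using h

/-- Tangent-vector identity (hMAIN2) in the paper's Lemma 4.1. -/
theorem stmt_11 {V W : Type*} [NormedAddCommGroup V] [InnerProductSpace ℝ V]
    [FiniteDimensional ℝ V] [NormedAddCommGroup W] [InnerProductSpace ℝ W]
    [FiniteDimensional ℝ W] (J : Fin 3 → (V →ₗ[ℝ] V))
    (hiso : ∀ (k : Fin 3) (x y : V), ⟪J k x, J k y⟫ = ⟪x, y⟫)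
    (hsq : ∀ (k : Fin 3) (x : V), J k (J k x) = -x)
    (hcomp : ∀ x : V, J 0 (J 1 x) = J 2 x)
    {n d : ℕ} (b : OrthonormalBasis (Fin n ⊕ Fin d) ℝ (WithLp 2 (V × W)))
    (s : Fin 3) :
    ∑ j : Fin n, ∑ β : Fin d,
      (⟪(b (Sum.inl j)).fst, (b (Sum.inr β)).fst⟫ ^ 2
        - ∑ k : Fin 3, ⟪(b (Sum.inl j)).fst, J k ((b (Sum.inr β)).fst)⟫ ^ 2)
      = -(∑ k ∈ ({s}ᶜ : Finset (Fin 3)), ∑ j : Fin n, ∑ β : Fin d,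
            ⟪J k ((b (Sum.inr β)).fst), (b (Sum.inl j)).fst⟫ ^ 2)
        + ∑ i : Fin n, ∑ j : Fin n,
            (⟪J s ((b (Sum.inl i)).fst), (b (Sum.inl j)).fst⟫ ^ 2
              - ⟪(b (Sum.inl i)).fst, (b (Sum.inl j)).fst⟫ ^ 2) := by
  set e : Fin n → V := fun j => (b (Sum.inl j)).fst with he
  set η : Fin d → V := fun β => (b (Sum.inr β)).fst with hη
  have key : ∀ v : V,
      (∑ j : Fin n, ⟪v, e j⟫ ^ 2) + ∑ β : Fin d, ⟪v, η β⟫ ^ 2 = ⟪v, v⟫ :=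
    fun v => aux_parseval b v
  -- basic sign identity: ⟪x, J k y⟫ = -⟪J k x, y⟫
  have hskew : ∀ (k : Fin 3) (x y : V), ⟪x, J k y⟫ = -⟪J k x, y⟫ := by
    intro k x y
    have := hiso k x (J k y)
    rw [hsq] at this
    rw [← this, inner_neg_right]
  set F : Fin 3 → ℝ := fun k => ∑ j : Fin n, ∑ β : Fin d, ⟪J k (η β), e j⟫ ^ 2 with hF
  -- compl sum
  have hcompl : (∑ k ∈ ({s}ᶜ : Finset (Fin 3)), F k) = (∑ k : Fin 3, F k) - F s := by
    have h := Finset.sum_compl_add_sum ({s} : Finset (Fin 3)) F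
    rw [Finset.sum_singleton] at h
    linarith
  -- distribute subtractions
  rw [Finset.sum_congr rfl (fun j _ => Finset.sum_sub_distrib (s := Finset.univ) _ _),
    Finset.sum_sub_distrib,
    Finset.sum_congr rfl (fun i _ => Finset.sum_sub_distrib (s := Finset.univ) _ _),
    Finset.sum_sub_distrib, hcompl]
  -- rearrange triple sum
  have hS : (∑ j : Fin n, ∑ β : Fin d, ∑ k : Fin 3, ⟪e j, J k (η β)⟫ ^ 2)
      = ∑ k : Fin 3, F k := by
    have h1 : ∀ j : Fin n, (∑ β : Fin d, ∑ k : Fin 3, ⟪e j, J k (η β)⟫ ^ 2)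
        = ∑ k : Fin 3, ∑ β : Fin d, ⟪J k (η β), e j⟫ ^ 2 := by
      intro j
      rw [Finset.sum_comm]
      simp [real_inner_comm]
    simp_rw [h1]
    exact Finset.sum_comm
  rw [hS]
  -- now scalar algebra: goal P - ∑F = -(∑F - F s) + (Q - R)
  have hPR : (∑ j : Fin n, ∑ β : Fin d, ⟪e j, η β⟫ ^ 2)
      + ∑ i : Fin n, ∑ j : Fin n, ⟪e i, e j⟫ ^ 2
      = ∑ i : Fin n, ⟪e i, e i⟫ := by
    rw [← Finset.sum_add_distrib]
    refine Finset.sum_congr rfl fun i _ => ?_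
    have := key (e i); linarith
  have hQB : (∑ i : Fin n, ∑ j : Fin n, ⟪J s (e i), e j⟫ ^ 2) + F s
      = ∑ i : Fin n, ⟪e i, e i⟫ := by
    have hB : F s = ∑ i : Fin n, ∑ β : Fin d, ⟪J s (e i), η β⟫ ^ 2 := by
      rw [hF]
      refine Finset.sum_congr rfl fun j _ => Finset.sum_congr rfl fun β _ => ?_
      rw [real_inner_comm, hskew]
      ring
    rw [hB, ← Finset.sum_add_distrib]
    refine Finset.sum_congr rfl fun i _ => ?_
    have := key (J s (e i))
    rw [hiso] at this
    linarith
  linarith
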